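/- Let A and B be C*-algebras with A unital, let u be a unitary element of A, and let T : A → B be a bounded linear map which is a *-homomorphism at u. Then T(1) is a projection in B, T(1) T(a) = T(a) T(1) for every a ∈ A, and the map a ↦ T(1) T(a) is a Jordan homomorphism, i.e., T(1) T(a²) = (T(1) T(a))² for every a ∈ A. -/

import Mathlib

open NormedSpace

set_option linter.unusedSectionVars false

/-- A map `T` between C*-algebras is a `*`-homomorphism at the point `z` if
`a * b* = z` implies `T (a * b*) = T a * (T b)* = T z` and
`c* * d = z` implies `T (c* * d) = (T c)* * T d = T z`. -/
def IsStarHomAt {A B : Type*} [Mul A] [Star A] [Mul B] [Star B]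
    (T : A → B) (z : A) : Prop :=
  (∀ a b : A, a * star b = z →
      T (a * star b) = T a * star (T b) ∧ T a * star (T b) = T z) ∧
  (∀ c d : A, star c * d = z →
      T (star c * d) = star (T c) * T d ∧ star (T c) * T d = T z)

/-- Derivative of a continuous linear map composed with the exponential. -/
lemma expDerivAux {A B : Type*} [NormedRing A] [NormedAlgebra ℝ A] [CompleteSpace A]
    [NormedAddCommGroup B] [NormedSpace ℝ B]
    (L : A →L[ℝ] B) (y : A) (s : ℝ) :
    HasDerivAt (fun t : ℝ => L (exp (t • y))) (L (y * exp (s • y))) s := by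
  exact
    (L.hasFDerivAt.comp_hasDerivAt s (hasDerivAt_exp_smul_const' (𝕂 := ℝ) y s))

/-- Product rule in a possibly non-unital normed ring. -/
lemma mulDerivAux {B : Type*} [NonUnitalNormedRing B] [NormedSpace ℝ B]
    [IsScalarTower ℝ B B] [SMulCommClass ℝ B B]
    {f g : ℝ → B} {f' g' : B} {s : ℝ} (hf : HasDerivAt f f' s) (hg : HasDerivAt g g' s) :
    HasDerivAt (fun t => f t * g t) (f s * g' + f' * g s) s := by
  simpa using (ContinuousLinearMap.mul ℝ B).hasDerivAt_of_bilinear (fun _ => hf) (fun _ => hg)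

/-- A constant function has vanishing derivative. -/
lemma derivZeroOfConst {B : Type*} [NormedAddCommGroup B] [NormedSpace ℝ B]
    {F : ℝ → B} {c D : B} {s : ℝ} (hc : ∀ t, F t = c) (hD : HasDerivAt F D s) : D = 0 := by
  have h0 : HasDerivAt F 0 s := by
    have hF : F = fun _ => c := funext hc
    rw [hF]; exact hasDerivAt_const s c
  exact hD.unique h0

/-- In a non-unital C*-algebra, if `q := e* e` satisfies `q⁴ = q` then `q² = q`. -/
lemma projAux {B : Type*} [NonUnitalNormedRing B] [StarRing B] [CStarRing B] [CompleteSpace B]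
    [NormedSpace ℂ B] [IsScalarTower ℂ B B] [SMulCommClass ℂ B B] [StarModule ℂ B]
    (e : B) (h4 : ((star e * e) * (star e * e)) * ((star e * e) * (star e * e)) = star e * e) :
    (star e * e) * (star e * e) = star e * e := by
  letI : NonUnitalCStarAlgebra B :=
    { ‹NonUnitalNormedRing B›, ‹StarRing B›, ‹CStarRing B›, ‹CompleteSpace B›,
      ‹NormedSpace ℂ B›, ‹IsScalarTower ℂ B B›, ‹SMulCommClass ℂ B B›, ‹StarModule ℂ B› with }
  set q : B := star e * e with hq
  set Q : Unitization ℂ B := (q : Unitization ℂ B) with hQdef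
  have hmul : ∀ x y : B, ((x * y : B) : Unitization ℂ B) = (x : Unitization ℂ B) * y :=
    fun x y => Unitization.inr_mul ℂ x y
  have h4' : (Q * Q) * (Q * Q) = Q := by
    rw [hQdef, ← hmul, ← hmul]
    exact congrArg _ h4
  have hqsa : star q = q := by rw [hq, star_mul, star_star]
  have hQsa : star Q = Q := by
    rw [hQdef, ← Unitization.inr_star, hqsa]
  have hQ0 : (0 : Unitization ℂ B) ≤ Q := by
    have : Q = star ((e : B) : Unitization ℂ B) * ((e : B) : Unitization ℂ B) := by
      rw [hQdef, hq, ← Unitization.inr_star, ← hmul]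
    rw [this]; exact star_mul_self_nonneg _
  have h4p : Q ^ 4 = Q := by
    rw [show (4 : ℕ) = 2 + 2 from rfl, pow_add, sq]; exact h4'
  have h5p : Q ^ 5 = Q ^ 2 := by
    rw [show (5 : ℕ) = 4 + 1 from rfl, pow_succ, h4p, ← sq]
  have h6p : Q ^ 6 = Q ^ 3 := by
    rw [show (6 : ℕ) = 4 + 2 from rfl, pow_add, h4p, show (3 : ℕ) = 1 + 2 from rfl, pow_add,
      pow_one]
  set R : Unitization ℂ B := Q ^ 2 - Q with hR
  have hRsa : star R = R := by
    rw [hR, star_sub, hQsa, star_pow, hQsa]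
  have hR3 : R ^ 3 = Q ^ 6 - 3 * Q ^ 5 + 3 * Q ^ 4 - Q ^ 3 := by
    rw [hR]; noncomm_ring
  have hR3' : R ^ 3 = -(3 * R) := by
    rw [hR3, h6p, h5p, h4p, hR]; noncomm_ring
  set X : Unitization ℂ B := R * R with hX
  have hXsa : star X = X := by rw [hX, star_mul, hRsa]
  have hX0 : (0 : Unitization ℂ B) ≤ X := by
    have := star_mul_self_nonneg R; rwa [hRsa] at this
  have hXX : X * X = -(3 * X) := by
    have h1 : X * X = R ^ 3 * R := by rw [hX]; noncomm_ring
    rw [h1, hR3', hX]; noncomm_ring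
  have hXX0 : (0 : Unitization ℂ B) ≤ -(3 * X) := by
    rw [← hXX]; have := star_mul_self_nonneg X; rwa [hXsa] at this
  have h3X0 : (0 : Unitization ℂ B) ≤ 3 * X := by
    have h3 : (3 : Unitization ℂ B) * X = X + X + X := by noncomm_ring
    rw [h3]; exact add_nonneg (add_nonneg hX0 hX0) hX0
  have h3Xz : (3 : Unitization ℂ B) * X = 0 := le_antisymm (by simpa using neg_nonneg.mp hXX0) h3X0
  have hXz : X = 0 := by
    have h3' : ((3 : ℝ) • X : Unitization ℂ B) = 0 := by
      rw [← smul_one_mul ((3:ℝ)) X, ← Algebra.algebraMap_eq_smul_one, map_ofNat]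
      exact h3Xz
    have hx : X = (3:ℝ)⁻¹ • ((3:ℝ) • X) := by rw [smul_smul]; norm_num
    rw [hx, h3', smul_zero]
  have hRz : R = 0 := by
    have : star R * R = 0 := by rw [hRsa, ← hX, hXz]
    exact (CStarRing.star_mul_self_eq_zero_iff R).mp this
  have hQQ : Q * Q = Q := by
    have := sub_eq_zero.mp hRz
    rwa [sq] at this
  have : ((q * q : B) : Unitization ℂ B) = ((q : B) : Unitization ℂ B) := by
    rw [hmul, ← hQdef, hQQ]
  exact Unitization.inr_injective this

section main

variable {A B : Type*}
    [NormedRing A] [StarRing A] [CStarRing A] [CompleteSpace A]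
    [NormedAlgebra ℂ A] [StarModule ℂ A]
    [NonUnitalNormedRing B] [StarRing B] [CStarRing B] [CompleteSpace B]
    [NormedSpace ℂ B] [IsScalarTower ℂ B B] [SMulCommClass ℂ B B] [StarModule ℂ B]

lemma expInvAux (a : A) : exp a * exp (-a) = 1 := by
  letI : NormedAlgebra ℚ A := .restrictScalars ℚ ℂ A
  rw [← exp_add_of_commute ((Commute.refl a).neg_right)]
  simp

/-- The first-order identity `(T x)* (T u) = (T 1)* T(x* u)`. -/
lemma keyI (u : A) (T : A →L[ℂ] B)
    (h : ∀ c d : A, star c * d = u → star (T c) * T d = T u) (x : A) :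
    star (T x) * T u = star (T 1) * T (star x * u) := by
  set L0 : A →L[ℝ] B := T.restrictScalars ℝ with hL0
  set Lr : A →L[ℝ] B := L0.comp ((ContinuousLinearMap.mul ℝ A).flip u) with hLr
  have hF : ∀ t : ℝ, star (L0 (exp (t • x))) * Lr (exp (t • (-star x))) = T u := by
    intro t
    have hstar : star (exp (t • x)) = exp (t • star x) := by
      rw [star_exp, star_smul, star_trivial]
    have hcd : star (exp (t • x)) * (exp (t • (-star x)) * u) = u := by
      rw [hstar, smul_neg, ← mul_assoc, expInvAux, one_mul]
    exact h _ _ hcd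
  have hd1 : HasDerivAt (fun t : ℝ => star (L0 (exp (t • x)))) (star (L0 x)) 0 := by
    have := (expDerivAux L0 x 0).star
    simpa using this
  have hd2 : HasDerivAt (fun t : ℝ => Lr (exp (t • (-star x)))) (Lr (-star x)) 0 := by
    have := expDerivAux Lr (-star x) 0
    simpa using this
  have h0 := derivZeroOfConst hF (mulDerivAux hd1 hd2)
  simp only [zero_smul, exp_zero, map_one, map_neg] at h0
  have h0' : star (T 1) * (-(T (star x * u))) + star (T x) * T (1 * u) = 0 := h0
  rw [one_mul, mul_neg, neg_add_eq_zero] at h0'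
  exact h0'.symm

/-- The function `K` obtained by differentiating the relation `T(u g) (T(g⁻¹*))* = T u`
along `g = exp(s z)` vanishes identically. -/
lemma keyKfun (u : A) (T : A →L[ℂ] B)
    (h : ∀ a b : A, a * star b = u → T a * star (T b) = T u) (z : A) :
    ∀ s : ℝ,
      T (u * exp (s • z)) * star (T ((-star z) * exp (s • (-star z))))
        + T (u * (z * exp (s • z))) * star (T (exp (s • (-star z)))) = 0 := by
  set L0 : A →L[ℝ] B := T.restrictScalars ℝ with hL0
  set L1 : A →L[ℝ] B := L0.comp (ContinuousLinearMap.mul ℝ A u) with hL1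
  set L1z : A →L[ℝ] B := L1.comp (ContinuousLinearMap.mul ℝ A z) with hL1z
  set N : A →L[ℝ] B := L0.comp (ContinuousLinearMap.mul ℝ A (-star z)) with hN
  have hG : ∀ t : ℝ, L1 (exp (t • z)) * star (L0 (exp (t • (-star z)))) = T u := by
    intro t
    have hstar : star (exp (t • (-star z))) = exp (-(t • z)) := by
      rw [star_exp, star_smul, star_trivial, star_neg, star_star, smul_neg]
    have hab : (u * exp (t • z)) * star (exp (t • (-star z))) = u := by
      rw [hstar, mul_assoc, expInvAux, mul_one]
    exact h _ _ hab
  intro s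
  have hd1 : HasDerivAt (fun t : ℝ => L1 (exp (t • z))) (L1z (exp (s • z))) s :=
    expDerivAux L1 z s
  have hd2 : HasDerivAt (fun t : ℝ => star (L0 (exp (t • (-star z)))))
      (star (N (exp (s • (-star z))))) s :=
    (expDerivAux L0 (-star z) s).star
  have h0 := derivZeroOfConst hG (mulDerivAux hd1 hd2)
  exact h0

/-- The first-order identity `T(u z) (T 1)* = T(u) (T (z*))*`. -/
lemma keyII (u : A) (T : A →L[ℂ] B)
    (hK : ∀ z : A, ∀ s : ℝ,
      T (u * exp (s • z)) * star (T ((-star z) * exp (s • (-star z))))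
        + T (u * (z * exp (s • z))) * star (T (exp (s • (-star z)))) = 0)
    (z : A) :
    T (u * z) * star (T 1) = T u * star (T (star z)) := by
  have h0 := hK z 0
  simp only [zero_smul, exp_zero, mul_one, map_neg, neg_mul, mul_neg, star_neg] at h0
  rw [neg_add_eq_zero] at h0
  exact h0.symm

/-- The second-order identity `T(u z) (T (z*))* = T(u) (T (z* z*))*`. -/
lemma keyS (u : A) (T : A →L[ℂ] B)
    (hK : ∀ z : A, ∀ s : ℝ,
      T (u * exp (s • z)) * star (T ((-star z) * exp (s • (-star z))))
        + T (u * (z * exp (s • z))) * star (T (exp (s • (-star z)))) = 0)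
    (hII : ∀ z : A, T (u * z) * star (T 1) = T u * star (T (star z)))
    (z : A) :
    T (u * z) * star (T (star z)) = T u * star (T (star z * star z)) := by
  set L0 : A →L[ℝ] B := T.restrictScalars ℝ with hL0
  set L1 : A →L[ℝ] B := L0.comp (ContinuousLinearMap.mul ℝ A u) with hL1
  set L1z : A →L[ℝ] B := L1.comp (ContinuousLinearMap.mul ℝ A z) with hL1z
  set N : A →L[ℝ] B := L0.comp (ContinuousLinearMap.mul ℝ A (-star z)) with hN
  set Nz : A →L[ℝ] B := N.comp (ContinuousLinearMap.mul ℝ A (-star z)) with hNz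
  set L1zz : A →L[ℝ] B := L1z.comp (ContinuousLinearMap.mul ℝ A z) with hL1zz
  have hd1 : HasDerivAt
      (fun t : ℝ => L1 (exp (t • z)) * star (N (exp (t • (-star z)))))
      (L1 (exp ((0:ℝ) • z)) * star (Nz (exp ((0:ℝ) • (-star z))))
        + L1z (exp ((0:ℝ) • z)) * star (N (exp ((0:ℝ) • (-star z))))) 0 :=
    mulDerivAux (expDerivAux L1 z 0) ((expDerivAux N (-star z) 0).star)
  have hd2 : HasDerivAt
      (fun t : ℝ => L1z (exp (t • z)) * star (L0 (exp (t • (-star z)))))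
      (L1z (exp ((0:ℝ) • z)) * star (N (exp ((0:ℝ) • (-star z))))
        + L1zz (exp ((0:ℝ) • z)) * star (L0 (exp ((0:ℝ) • (-star z))))) 0 :=
    mulDerivAux (expDerivAux L1z z 0) ((expDerivAux L0 (-star z) 0).star)
  have h0 := derivZeroOfConst (hK z) (hd1.add hd2)
  simp only [zero_smul, exp_zero] at h0
  have h0' : T (u * 1) * star (T ((-star z) * ((-star z) * 1)))
      + T (u * (z * 1)) * star (T ((-star z) * 1))
      + (T (u * (z * 1)) * star (T ((-star z) * 1))
        + T (u * (z * (z * 1))) * star (T 1)) = 0 := h0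
  simp only [mul_one, map_neg, star_neg, mul_neg, neg_mul, neg_neg] at h0'
  rw [hII (z * z), star_mul] at h0'
  set a : B := T (u * z) * star (T (star z)) with ha
  set b : B := T u * star (T (star z * star z)) with hbdef
  have h2 : a + a = b + b := by
    have hneg : b + b - (a + a) = 0 := by rw [← h0']; abel
    exact (sub_eq_zero.mp hneg).symm
  have h2' : (2:ℝ) • a = (2:ℝ) • b := by
    rw [two_smul, two_smul]; exact h2
  calc a = (2:ℝ)⁻¹ • ((2:ℝ) • a) := by rw [smul_smul]; norm_num
    _ = (2:ℝ)⁻¹ • ((2:ℝ) • b) := by rw [h2']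
    _ = b := by rw [smul_smul]; norm_num

/-- The purely algebraic endgame. -/
lemma finalAlgebra (u : A) (hu1 : u * star u = 1) (hu2 : star u * u = 1) (T : A →L[ℂ] B)
    (hI : ∀ x : A, star (T x) * T u = star (T 1) * T (star x * u))
    (hII : ∀ z : A, T (u * z) * star (T 1) = T u * star (T (star z)))
    (hS : ∀ z : A, T (u * z) * star (T (star z)) = T u * star (T (star z * star z)))
    (h1 : star (T 1) * T u = T u)
    (h2 : T u * star (T 1) = T u) :
    (star (T 1) = T 1 ∧ T 1 * T 1 = T 1) ∧
    (∀ a : A, T 1 * T a = T a * T 1) ∧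
    (∀ a : A, T 1 * T (a * a) = (T 1 * T a) * (T 1 * T a)) := by
  have h1' : star (T u) * T 1 = star (T u) := by
    have := congrArg star h1
    rwa [star_mul, star_star] at this
  have h2' : T 1 * star (T u) = star (T u) := by
    have := congrArg star h2
    rwa [star_mul, star_star] at this
  have hvsv : star (T u) * T u = star (T 1) * T 1 := by
    have := hI u
    rwa [hu2] at this
  have hvvs : T u * star (T u) = T 1 * star (T 1) := by
    have := hII (star u)
    rw [hu1, star_star] at this
    exact this.symm
  have hA : ∀ y : A, star (T (u * star y)) * T u = star (T 1) * T y := by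
    intro y
    have := hI (u * star y)
    rwa [star_mul, star_star, mul_assoc, hu2, mul_one] at this
  have hB : ∀ y : A, T y * star (T u) = T 1 * star (T (u * star y)) := by
    intro y
    have h := hII (star y)
    rw [star_star] at h
    have h' := congrArg star h
    rw [star_mul, star_mul, star_star, star_star] at h'
    exact h'.symm
  have hC : ∀ y : A, T y * (star (T 1) * T 1) = (T 1 * star (T 1)) * T y := by
    intro y
    calc T y * (star (T 1) * T 1)
        = T y * (star (T u) * T u) := by rw [hvsv]
      _ = (T y * star (T u)) * T u := (mul_assoc _ _ _).symm
      _ = (T 1 * star (T (u * star y))) * T u := by rw [hB y]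
      _ = T 1 * (star (T (u * star y)) * T u) := mul_assoc _ _ _
      _ = T 1 * (star (T 1) * T y) := by rw [hA y]
      _ = (T 1 * star (T 1)) * T y := (mul_assoc _ _ _).symm
  have hq2 : (star (T 1) * T 1) * (star (T 1) * T 1) = T 1 * star (T 1) := by
    calc (star (T 1) * T 1) * (star (T 1) * T 1)
        = star (T 1) * (T 1 * (star (T 1) * T 1)) := mul_assoc _ _ _
      _ = star (T 1) * ((T 1 * star (T 1)) * T 1) := by
          rw [← mul_assoc (T 1) (star (T 1)) (T 1)]
      _ = star (T 1) * ((T u * star (T u)) * T 1) := by rw [hvvs]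
      _ = star (T 1) * (T u * (star (T u) * T 1)) := by rw [mul_assoc (T u)]
      _ = star (T 1) * (T u * star (T u)) := by rw [h1']
      _ = (star (T 1) * T u) * star (T u) := (mul_assoc _ _ _).symm
      _ = T u * star (T u) := by rw [h1]
      _ = T 1 * star (T 1) := hvvs
  have hp2 : (T 1 * star (T 1)) * (T 1 * star (T 1)) = star (T 1) * T 1 := by
    calc (T 1 * star (T 1)) * (T 1 * star (T 1))
        = T 1 * (star (T 1) * (T 1 * star (T 1))) := mul_assoc _ _ _
      _ = T 1 * ((star (T 1) * T 1) * star (T 1)) := by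
          rw [← mul_assoc (star (T 1)) (T 1) (star (T 1))]
      _ = T 1 * ((star (T u) * T u) * star (T 1)) := by rw [hvsv]
      _ = T 1 * (star (T u) * (T u * star (T 1))) := by rw [mul_assoc (star (T u))]
      _ = T 1 * (star (T u) * T u) := by rw [h2]
      _ = (T 1 * star (T u)) * T u := (mul_assoc _ _ _).symm
      _ = star (T u) * T u := by rw [h2']
      _ = star (T 1) * T 1 := hvsv
  have hq4 : ((star (T 1) * T 1) * (star (T 1) * T 1))
      * ((star (T 1) * T 1) * (star (T 1) * T 1)) = star (T 1) * T 1 := by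
    rw [hq2]; exact hp2
  have hqq : (star (T 1) * T 1) * (star (T 1) * T 1) = star (T 1) * T 1 := projAux (T 1) hq4
  have hep : T 1 * star (T 1) = star (T 1) * T 1 := by rw [← hq2, hqq]
  -- e q = q and q e* = q
  have heq1 : T 1 * (star (T 1) * T 1) = star (T 1) * T 1 := by
    calc T 1 * (star (T 1) * T 1)
        = (T 1 * star (T 1)) * T 1 := (mul_assoc _ _ _).symm
      _ = (T u * star (T u)) * T 1 := by rw [hvvs]
      _ = T u * (star (T u) * T 1) := mul_assoc _ _ _
      _ = T u * star (T u) := by rw [h1']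
      _ = T 1 * star (T 1) := hvvs
      _ = star (T 1) * T 1 := hep
  have heq2 : (star (T 1) * T 1) * star (T 1) = star (T 1) * T 1 := by
    calc (star (T 1) * T 1) * star (T 1)
        = star (T 1) * (T 1 * star (T 1)) := mul_assoc _ _ _
      _ = star (T 1) * (T u * star (T u)) := by rw [hvvs]
      _ = (star (T 1) * T u) * star (T u) := (mul_assoc _ _ _).symm
      _ = T u * star (T u) := by rw [h1]
      _ = T 1 * star (T 1) := hvvs
      _ = star (T 1) * T 1 := hep
  have eq0 : (T 1 - star (T 1) * T 1) * star (T 1 - star (T 1) * T 1) = 0 := by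
    rw [star_sub, star_mul, star_star, sub_mul, mul_sub, mul_sub]
    rw [heq1, heq2, hqq, hep]
    abel
  have h_sub : T 1 - star (T 1) * T 1 = 0 :=
    (CStarRing.mul_star_self_eq_zero_iff _).mp eq0
  have h_eq : T 1 = star (T 1) * T 1 := by rwa [sub_eq_zero] at h_sub
  have goal1a : star (T 1) = T 1 := by
    calc star (T 1) = star (star (T 1) * T 1) := by rw [← h_eq]
      _ = star (T 1) * T 1 := by rw [star_mul, star_star]
      _ = T 1 := h_eq.symm
  have hcomm : ∀ y : A, T y * (star (T 1) * T 1) = (star (T 1) * T 1) * T y := by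
    intro y
    have := hC y
    rwa [hep] at this
  have goal1b : T 1 * T 1 = T 1 := by rw [h_eq]; exact hqq
  have goal2 : ∀ a : A, T 1 * T a = T a * T 1 := by
    intro a
    rw [h_eq]
    exact (hcomm a).symm
  refine ⟨⟨goal1a, goal1b⟩, goal2, ?_⟩
  intro a
  have hw := hS (star a)
  rw [star_star] at hw
  -- hw : T (u * star a) * star (T a) = T u * star (T (a * a))
  have hw' := congrArg star hw
  rw [star_mul, star_mul, star_star, star_star] at hw'
  -- hw' : T a * star (T (u * star a)) = T (a * a) * star (T u)
  have hw3 := congrArg (· * T u) hw'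
  rw [mul_assoc, mul_assoc, hA a, hvsv] at hw3
  -- hw3 : T a * (star (T 1) * T a) = T (a * a) * (star (T 1) * T 1)
  rw [goal1a] at hw3
  rw [goal1b] at hw3
  -- hw3 : T a * (T 1 * T a) = T (a * a) * T 1
  calc T 1 * T (a * a)
      = (T 1 * T 1) * T (a * a) := by rw [goal1b]
    _ = T 1 * (T 1 * T (a * a)) := mul_assoc _ _ _
    _ = T 1 * (T (a * a) * T 1) := by rw [goal2 (a * a)]
    _ = T 1 * (T a * (T 1 * T a)) := by rw [hw3]
    _ = (T 1 * T a) * (T 1 * T a) := (mul_assoc _ _ _).symm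

end main

theorem stmt13 {A B : Type*}
    [NormedRing A] [StarRing A] [CStarRing A] [CompleteSpace A]
    [NormedAlgebra ℂ A] [StarModule ℂ A]
    [NonUnitalNormedRing B] [StarRing B] [CStarRing B] [CompleteSpace B]
    [NormedSpace ℂ B] [IsScalarTower ℂ B B] [SMulCommClass ℂ B B] [StarModule ℂ B]
    (u : A) (hu1 : u * star u = 1) (hu2 : star u * u = 1)
    (T : A →L[ℂ] B)
    (h : IsStarHomAt (⇑T) u) :
    (star (T 1) = T 1 ∧ T 1 * T 1 = T 1) ∧
    (∀ a : A, T 1 * T a = T a * T 1) ∧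
    (∀ a : A, T 1 * T (a * a) = (T 1 * T a) * (T 1 * T a)) := by
  have hI' := keyI u T (fun c d hcd => (h.2 c d hcd).2)
  have hK := keyKfun u T (fun a b hab => (h.1 a b hab).2)
  have hII' := keyII u T hK
  have hS' := keyS u T hK hII'
  have h1 : star (T 1) * T u = T u := by
    have hcd : star (1 : A) * u = u := by rw [star_one, one_mul]
    exact (h.2 1 u hcd).2
  have h2 : T u * star (T 1) = T u := by
    have hab : u * star (1 : A) = u := by rw [star_one, mul_one]
    exact (h.1 u 1 hab).2
  exact finalAlgebra u hu1 hu2 T hI' hII' hS' h1 h2
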